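/- For n, m ≥ 2, mbt(K_{2n} □ C_{2m}) = 2n + 2 = Δ(K_{2n} □ C_{2m}) + 1. -/

import Mathlib

open SimpleGraph
open scoped Classical

/-- A matching book embedding of `G` in `k` pages: a linear order (spine) on the
vertices together with a page assignment for the edges such that each page is a
matching (every vertex has degree at most one per page) and edges on the same
page do not cross with respect to the spine order. -/
structure MatchingBookEmbedding {V : Type*} [Fintype V] (G : SimpleGraph V) (k : ℕ) where
  ord : V ≃ Fin (Fintype.card V)
  page : G.edgeSet → Fin k
  matching : ∀ e f : G.edgeSet, e ≠ f → page e = page f →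
    ∀ v : V, v ∈ (e : Sym2 V) → v ∉ (f : Sym2 V)
  noncross : ∀ e f : G.edgeSet, page e = page f →
    ∀ a b c d : V, (e : Sym2 V) = s(a, b) → (f : Sym2 V) = s(c, d) →
      ord a < ord c → ord c < ord b → ord b < ord d → False

/-- The matching book thickness: the minimum number of pages over all matching
book embeddings. -/
noncomputable def mbt {V : Type*} [Fintype V] (G : SimpleGraph V) : ℕ :=
  sInf {k | Nonempty (MatchingBookEmbedding G k)}


namespace MBT10

lemma even_card_of_invol {α : Type*} [DecidableEq α] (f : α → α) (s : Finset α)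
    (hmem : ∀ x ∈ s, f x ∈ s) (hinv : ∀ x ∈ s, f (f x) = x) (hne : ∀ x ∈ s, f x ≠ x) :
    Even s.card := by
  induction s using Finset.strongInduction with
  | _ s ih =>
    rcases s.eq_empty_or_nonempty with rfl | ⟨x, hx⟩
    · simp
    · have hfx := hmem x hx
      have hxne := hne x hx
      have hpair : ({x, f x} : Finset α) ⊆ s := by
        intro y hy; simp only [Finset.mem_insert, Finset.mem_singleton] at hy
        rcases hy with rfl | rfl <;> assumption
      have hss : s \ {x, f x} ⊂ s :=
        Finset.sdiff_ssubset hpair (by simp)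
      have hmem' : ∀ y ∈ s \ {x, f x}, f y ∈ s \ {x, f x} := by
        intro y hy
        simp only [Finset.mem_sdiff, Finset.mem_insert, Finset.mem_singleton] at hy ⊢
        obtain ⟨hys, hy12⟩ := hy
        push_neg at hy12
        obtain ⟨hy1, hy2⟩ := hy12
        push_neg
        refine ⟨hmem y hys, ?_, ?_⟩
        · intro h; exact hy2 (by rw [← hinv y hys, h])
        · intro h
          have := congrArg f h
          rw [hinv y hys, hinv x hx] at this
          exact hy1 this
      have hinv' : ∀ y ∈ s \ {x, f x}, f (f y) = y := fun y hy =>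
        hinv y (Finset.mem_sdiff.mp hy).1
      have hne' : ∀ y ∈ s \ {x, f x}, f y ≠ y := fun y hy =>
        hne y (Finset.mem_sdiff.mp hy).1
      have heven := ih _ hss hmem' hinv' hne'
      have hcard : (s \ {x, f x}).card = s.card - 2 := by
        rw [Finset.card_sdiff_of_subset hpair, Finset.card_pair (Ne.symm hxne)]
      have h2 : 2 ≤ s.card := by
        have := Finset.card_le_card hpair
        rwa [Finset.card_pair (Ne.symm hxne)] at this
      rw [hcard] at heven
      obtain ⟨t, ht⟩ := heven
      exact ⟨t + 1, by omega⟩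


abbrev VV (n m : ℕ) := Fin (2*n) × Fin (2*m)

def pos (n m : ℕ) (v : VV n m) : ℕ :=
  v.2.val * (2*n) + (if Even v.2.val then v.1.val else 2*n - 1 - v.1.val)

def natPage (n m : ℕ) (u v : VV n m) : ℕ :=
  if u.2 = v.2 then (u.1.val + v.1.val) % (2*n)
  else 2*n + (if u.2.val + 1 = v.2.val ∨ v.2.val + 1 = u.2.val then min u.2.val v.2.val % 2 else 1)

lemma natPage_comm (n m : ℕ) (u v : VV n m) : natPage n m u v = natPage n m v u := by
  unfold natPage
  by_cases h : u.2 = v.2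
  · rw [if_pos h, if_pos h.symm, Nat.add_comm]
  · rw [if_neg h, if_neg (show ¬(v.2 = u.2) from fun hh => h hh.symm)]
    by_cases hc : u.2.val + 1 = v.2.val ∨ v.2.val + 1 = u.2.val
    · rw [if_pos hc, if_pos (Or.symm hc), Nat.min_comm]
    · rw [if_neg hc, if_neg (fun hb => hc (Or.symm hb))]

lemma natPage_lt (n m : ℕ) (u v : VV n m) : natPage n m u v < 2*n + 2 := by
  have h2n : 0 < 2*n := Nat.pos_of_ne_zero (fun h => by have := u.1.isLt; omega)
  unfold natPage
  split
  · have := Nat.mod_lt (u.1.val + v.1.val) h2n; omega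
  · split
    · have := Nat.mod_lt (min u.2.val v.2.val) (show 0 < 2 by norm_num); omega
    · omega

lemma pos_spec (n m : ℕ) (v : VV n m) :
    ∃ r, r < 2*n ∧ pos n m v = v.2.val * (2*n) + r := by
  refine ⟨if Even v.2.val then v.1.val else 2*n - 1 - v.1.val, ?_, rfl⟩
  have := v.1.isLt
  split <;> omega

lemma pos_lt (n m : ℕ) (v : VV n m) : pos n m v < 2*m*(2*n) := by
  obtain ⟨r, hr, h⟩ := pos_spec n m v
  have hj := v.2.isLt
  have hmul : (v.2.val + 1) * (2*n) ≤ 2*m*(2*n) :=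
    Nat.mul_le_mul_right _ (by omega)
  rw [add_mul, one_mul] at hmul
  omega

lemma pos_inj (n m : ℕ) : Function.Injective (pos n m) := by
  intro u v h
  obtain ⟨r, hr, hu⟩ := pos_spec n m u
  obtain ⟨r', hr', hv⟩ := pos_spec n m v
  have h2 : u.2.val = v.2.val := by
    rcases Nat.lt_trichotomy u.2.val v.2.val with hlt | heq | hlt
    · have hmul : (u.2.val + 1) * (2*n) ≤ v.2.val * (2*n) :=
        Nat.mul_le_mul_right _ (by omega)
      rw [add_mul, one_mul] at hmul
      omega
    · exact heq
    · have hmul : (v.2.val + 1) * (2*n) ≤ u.2.val * (2*n) :=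
        Nat.mul_le_mul_right _ (by omega)
      rw [add_mul, one_mul] at hmul
      omega
  have h1 : u.1.val = v.1.val := by
    have hh : pos n m u = pos n m v := h
    unfold pos at hh
    rw [h2] at hh
    have hi := u.1.isLt
    have hi' := v.1.isLt
    by_cases hpar : Even v.2.val
    · rw [if_pos hpar, if_pos hpar] at hh
      omega
    · rw [if_neg hpar, if_neg hpar] at hh
      omega
  exact Prod.ext (Fin.ext h1) (Fin.ext h2)

noncomputable def ordEquiv (n m : ℕ) : VV n m ≃ Fin (Fintype.card (VV n m)) :=
  Equiv.ofBijective
    (fun v => ⟨pos n m v, by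
      have h1 : Fintype.card (VV n m) = 2*m*(2*n) := by
        simp [VV, Nat.mul_comm]
      rw [h1]; exact pos_lt n m v⟩)
    ((Fintype.bijective_iff_injective_and_card _).mpr
      ⟨fun u v h => pos_inj n m (by simpa using h), by simp⟩)

lemma ordEquiv_lt_iff (n m : ℕ) (a b : VV n m) :
    ordEquiv n m a < ordEquiv n m b ↔ pos n m a < pos n m b := Iff.rfl

lemma fin_sub_one_cases {N : ℕ} {u v : Fin N} (h : (u - v).val = 1) :
    v.val + 1 = u.val ∨ (v.val = N - 1 ∧ u.val = 0) := by
  rw [Fin.sub_def] at h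
  simp only at h
  have hu := u.isLt
  have hv := v.isLt
  have hN : 0 < N := Nat.pos_of_ne_zero (by omega)
  rcases Nat.lt_or_ge ((N - v.val) + u.val) N with h1 | h1
  · rw [Nat.mod_eq_of_lt h1] at h
    omega
  · rw [Nat.mod_eq_sub_mod h1, Nat.mod_eq_of_lt (by omega)] at h
    omega

lemma cyc_adj_cases {N : ℕ} {u v : Fin N} (h : (cycleGraph N).Adj u v) :
    u.val + 1 = v.val ∨ v.val + 1 = u.val ∨
    (u.val = 0 ∧ v.val = N - 1) ∨ (v.val = 0 ∧ u.val = N - 1) := by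
  rw [cycleGraph_adj'] at h
  rcases h with h | h
  · rcases fin_sub_one_cases h with h' | h'
    · exact Or.inr (Or.inl h')
    · exact Or.inr (Or.inr (Or.inl ⟨h'.2, h'.1⟩))
  · rcases fin_sub_one_cases h with h' | h'
    · exact Or.inl h'
    · exact Or.inr (Or.inr (Or.inr ⟨h'.2, h'.1⟩))

lemma k_edge_page (n m : ℕ) (u v : VV n m) (h2 : u.2 = v.2) :
    natPage n m u v = (u.1.val + v.1.val) % (2*n) := by
  unfold natPage; rw [if_pos h2]

lemma pos_eq (n m : ℕ) (v : VV n m) :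
    pos n m v = v.2.val * (2*n) + (if Even v.2.val then v.1.val else 2*n - 1 - v.1.val) := rfl

/-- description of a non-wrap cycle edge oriented with `u.2 + 1 = v.2`. -/
lemma cyc_edge_nonwrap (n m : ℕ) (u v : VV n m)
    (h1 : u.1 = v.1) (hj : u.2.val + 1 = v.2.val) :
    natPage n m u v = 2*n + u.2.val % 2 ∧
    pos n m u + pos n m v + 1 = (2*u.2.val+2)*(2*n) ∧
    u.2.val*(2*n) ≤ pos n m u ∧ pos n m u < (u.2.val+2)*(2*n) ∧
    u.2.val*(2*n) ≤ pos n m v ∧ pos n m v < (u.2.val+2)*(2*n) := by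
  have hne : u.2 ≠ v.2 := fun h => by rw [h] at hj; omega
  have hi := u.1.isLt
  have hpage : natPage n m u v = 2*n + u.2.val % 2 := by
    unfold natPage
    rw [if_neg hne, if_pos (Or.inl hj)]
    congr 1
    have : min u.2.val v.2.val = u.2.val := by omega
    rw [this]
  refine ⟨hpage, ?_⟩
  have e1 : (u.2.val+1)*(2*n) = u.2.val*(2*n) + 2*n := by ring
  have e2 : (u.2.val+2)*(2*n) = u.2.val*(2*n) + 2*(2*n) := by ring
  have e3 : (2*u.2.val+2)*(2*n) = 2*(u.2.val*(2*n)) + 2*(2*n) := by ring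
  rw [pos_eq n m u, pos_eq n m v, ← h1, ← hj, e1, e2, e3]
  by_cases hpar : Even u.2.val
  · have hpar' : ¬ Even (u.2.val + 1) := by
      rw [Nat.even_iff] at hpar ⊢; omega
    rw [if_pos hpar, if_neg hpar']
    omega
  · have hpar' : Even (u.2.val + 1) := by
      rw [Nat.even_iff] at hpar ⊢; omega
    rw [if_neg hpar, if_pos hpar']
    omega

/-- description of the wrap cycle edge oriented with `u.2 = 0`, `v.2 = 2m-1`. -/
lemma cyc_edge_wrap (n m : ℕ) (hm : 2 ≤ m) (u v : VV n m)
    (h1 : u.1 = v.1) (hu0 : u.2.val = 0) (hv1 : v.2.val = 2*m - 1) :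
    natPage n m u v = 2*n + 1 ∧
    pos n m u + pos n m v + 1 = 2*m*(2*n) ∧
    pos n m u < 2*n ∧ (2*m-1)*(2*n) ≤ pos n m v := by
  have hne : u.2 ≠ v.2 := fun h => by rw [h] at hu0; omega
  have hi := u.1.isLt
  have hpage : natPage n m u v = 2*n + 1 := by
    unfold natPage
    rw [if_neg hne, if_neg (by omega)]
  refine ⟨hpage, ?_⟩
  have e1 : (2*m-1)*(2*n) + 2*n = 2*m*(2*n) := by
    have : (2*m-1) + 1 = 2*m := by omega
    calc (2*m-1)*(2*n) + 2*n = ((2*m-1)+1)*(2*n) := by ring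
    _ = 2*m*(2*n) := by rw [this]
  have hpar0 : Even (0:ℕ) := Even.zero
  have hpar1 : ¬ Even (2*m - 1) := by rw [Nat.even_iff]; omega
  rw [pos_eq n m u, pos_eq n m v, ← h1, hu0, hv1, if_pos hpar0, if_neg hpar1]
  omega

lemma cyc_edge_desc (n m : ℕ) (hm : 2 ≤ m) (u v : VV n m)
    (h1 : u.1 = v.1) (h : (cycleGraph (2*m)).Adj u.2 v.2) :
    (∃ bb, bb + 2 ≤ 2*m ∧ natPage n m u v = 2*n + bb % 2 ∧
      pos n m u + pos n m v + 1 = (2*bb+2)*(2*n) ∧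
      bb*(2*n) ≤ pos n m u ∧ pos n m u < (bb+2)*(2*n) ∧
      bb*(2*n) ≤ pos n m v ∧ pos n m v < (bb+2)*(2*n)) ∨
    (natPage n m u v = 2*n + 1 ∧ pos n m u + pos n m v + 1 = 2*m*(2*n) ∧
      (pos n m u < 2*n ∨ (2*m-1)*(2*n) ≤ pos n m u) ∧
      (pos n m v < 2*n ∨ (2*m-1)*(2*n) ≤ pos n m v)) := by
  rcases cyc_adj_cases h with hc | hc | hc | hc
  · obtain ⟨hp, hs, h3, h4, h5, h6⟩ := cyc_edge_nonwrap n m u v h1 hc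
    exact Or.inl ⟨u.2.val, by have := v.2.isLt; omega, hp, hs, h3, h4, h5, h6⟩
  · obtain ⟨hp, hs, h3, h4, h5, h6⟩ := cyc_edge_nonwrap n m v u h1.symm hc
    rw [natPage_comm n m u v]
    exact Or.inl ⟨v.2.val, by have := u.2.isLt; omega, hp, by omega, h5, h6, h3, h4⟩
  · obtain ⟨hp, hs, h3, h4⟩ := cyc_edge_wrap n m hm u v h1 hc.1 hc.2
    exact Or.inr ⟨hp, hs, Or.inl h3, Or.inr h4⟩
  · obtain ⟨hp, hs, h3, h4⟩ := cyc_edge_wrap n m hm v u h1.symm hc.1 hc.2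
    rw [natPage_comm n m u v]
    exact Or.inr ⟨hp, by omega, Or.inr h4, Or.inl h3⟩

def pageF (n m : ℕ) : Sym2 (VV n m) → ℕ :=
  Sym2.lift ⟨natPage n m, natPage_comm n m⟩

lemma pageF_mk (n m : ℕ) (u v : VV n m) : pageF n m s(u, v) = natPage n m u v := rfl

theorem exists_embedding (n m : ℕ) (hn : 1 ≤ n) (hm : 2 ≤ m) :
    Nonempty (MatchingBookEmbedding
      ((⊤ : SimpleGraph (Fin (2*n))) □ cycleGraph (2*m)) (2*n+2)) := by
  set G := (⊤ : SimpleGraph (Fin (2*n))) □ cycleGraph (2*m) with hG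
  refine ⟨⟨ordEquiv n m, fun e => ⟨pageF n m e.1 % (2*n+2), Nat.mod_lt _ (by omega)⟩, ?_, ?_⟩⟩
  · -- matching
    intro e f hef hp v hve hvf
    obtain ⟨w, hw⟩ := Sym2.mem_iff_exists.mp hve
    obtain ⟨w', hw'⟩ := Sym2.mem_iff_exists.mp hvf
    have hadj : G.Adj v w := (SimpleGraph.mem_edgeSet G).mp (hw ▸ e.2)
    have hadj' : G.Adj v w' := (SimpleGraph.mem_edgeSet G).mp (hw' ▸ f.2)
    have hnp : natPage n m v w = natPage n m v w' := by
      have h1 := congrArg Fin.val hp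
      simp only [] at h1
      rw [show (e : Sym2 (VV n m)) = s(v, w) from hw,
          show (f : Sym2 (VV n m)) = s(v, w') from hw', pageF_mk, pageF_mk] at h1
      rwa [Nat.mod_eq_of_lt (natPage_lt n m v w), Nat.mod_eq_of_lt (natPage_lt n m v w')] at h1
    have hww : w = w' := by
      rw [hG, SimpleGraph.boxProd_adj] at hadj hadj'
      rcases hadj with ⟨hK, hb⟩ | ⟨hcc2, hcc1⟩ <;>
        rcases hadj' with ⟨hK', hb'⟩ | ⟨hcc2', hcc1'⟩
      · -- both K-edges
        rw [k_edge_page n m v w hb, k_edge_page n m v w' hb'] at hnp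
        have hMod : Nat.ModEq (2*n) w.1.val w'.1.val :=
          Nat.ModEq.add_left_cancel' v.1.val hnp
        have heq1 : w.1.val = w'.1.val := by
          have h2 : w.1.val % (2*n) = w'.1.val % (2*n) := hMod
          rwa [Nat.mod_eq_of_lt w.1.isLt, Nat.mod_eq_of_lt w'.1.isLt] at h2
        exact Prod.ext (Fin.ext heq1) (hb.symm.trans hb')
      · -- K vs cycle
        exfalso
        rw [k_edge_page n m v w hb] at hnp
        have hlt : (v.1.val + w.1.val) % (2*n) < 2*n :=
          Nat.mod_lt _ (by have := v.1.isLt; omega)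
        rcases cyc_edge_desc n m hm v w' hcc1' hcc2' with ⟨bb, _, hp2, _⟩ | ⟨hp2, _⟩ <;>
          rw [hp2] at hnp <;> omega
      · -- cycle vs K
        exfalso
        rw [k_edge_page n m v w' hb'] at hnp
        have hlt : (v.1.val + w'.1.val) % (2*n) < 2*n :=
          Nat.mod_lt _ (by have := v.1.isLt; omega)
        rcases cyc_edge_desc n m hm v w hcc1 hcc2 with ⟨bb, _, hp2, _⟩ | ⟨hp2, _⟩ <;>
          rw [hp2] at hnp <;> omega
      · -- both cycle edges
        have hq := hnp
        unfold natPage at hq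
        rw [if_neg hcc2.ne, if_neg hcc2'.ne] at hq
        have hA := cyc_adj_cases hcc2
        have hA' := cyc_adj_cases hcc2'
        have hv2 := v.2.isLt
        have hw2 := w.2.isLt
        have hw2' := w'.2.isLt
        have h22 : w.2.val = w'.2.val := by
          split_ifs at hq <;> omega
        exact Prod.ext (hcc1.symm.trans hcc1') (Fin.ext h22)
    exact hef (Subtype.ext (by rw [hw, hw', hww]))
  · -- noncross
    intro e f hp a b c d he hf h1 h2 h3
    have p1 : pos n m a < pos n m c := h1
    have p2 : pos n m c < pos n m b := h2
    have p3 : pos n m b < pos n m d := h3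
    have hadjE : G.Adj a b := (SimpleGraph.mem_edgeSet G).mp (he ▸ e.2)
    have hadjF : G.Adj c d := (SimpleGraph.mem_edgeSet G).mp (hf ▸ f.2)
    have hnp : natPage n m a b = natPage n m c d := by
      have h4 := congrArg Fin.val hp
      simp only [] at h4
      rw [show (e : Sym2 (VV n m)) = s(a, b) from he,
          show (f : Sym2 (VV n m)) = s(c, d) from hf, pageF_mk, pageF_mk] at h4
      rwa [Nat.mod_eq_of_lt (natPage_lt n m a b), Nat.mod_eq_of_lt (natPage_lt n m c d)] at h4
    rw [hG, SimpleGraph.boxProd_adj] at hadjE hadjF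
    have hia := a.1.isLt
    have hib := b.1.isLt
    have hic := c.1.isLt
    have hid := d.1.isLt
    rcases hadjE with ⟨hK, hb⟩ | ⟨hcc2, hcc1⟩ <;>
      rcases hadjF with ⟨hK', hb'⟩ | ⟨hcc2', hcc1'⟩
    · -- K vs K
      have hpa := pos_eq n m a
      have hpb := pos_eq n m b
      have hpc := pos_eq n m c
      have hpd := pos_eq n m d
      rw [← hb] at hpb
      rw [← hb'] at hpd
      have hσa : (if Even a.2.val then a.1.val else 2*n - 1 - a.1.val) < 2*n := by
        split <;> omega
      have hσb : (if Even a.2.val then b.1.val else 2*n - 1 - b.1.val) < 2*n := by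
        split <;> omega
      have hσc : (if Even c.2.val then c.1.val else 2*n - 1 - c.1.val) < 2*n := by
        split <;> omega
      have hσd : (if Even c.2.val then d.1.val else 2*n - 1 - d.1.val) < 2*n := by
        split <;> omega
      have hj : a.2.val = c.2.val := by
        rcases Nat.lt_trichotomy a.2.val c.2.val with hlt | heq | hlt
        · exfalso
          have hmul : (a.2.val + 1)*(2*n) ≤ c.2.val*(2*n) := Nat.mul_le_mul_right _ (by omega)
          rw [add_mul, one_mul] at hmul
          omega
        · exact heq
        · exfalso
          have hmul : (c.2.val + 1)*(2*n) ≤ a.2.val*(2*n) := Nat.mul_le_mul_right _ (by omega)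
          rw [add_mul, one_mul] at hmul
          omega
      rw [← hj] at hpc hpd
      have hnp' : (a.1.val + b.1.val) % (2*n) = (c.1.val + d.1.val) % (2*n) := by
        rw [k_edge_page n m a b hb, k_edge_page n m c d hb'] at hnp
        exact hnp
      by_cases hpar : Even a.2.val
      · rw [if_pos hpar] at hpa hpb hpc hpd
        have ho1 : a.1.val < c.1.val := by omega
        have ho2 : c.1.val < b.1.val := by omega
        have ho3 : b.1.val < d.1.val := by omega
        have hdvd : (2*n) ∣ (c.1.val + d.1.val) - (a.1.val + b.1.val) :=
          (Nat.modEq_iff_dvd' (by omega)).mp hnp'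
        have := Nat.le_of_dvd (by omega) hdvd
        omega
      · rw [if_neg hpar] at hpa hpb hpc hpd
        have ho1 : c.1.val < a.1.val := by omega
        have ho2 : b.1.val < c.1.val := by omega
        have ho3 : d.1.val < b.1.val := by omega
        have hdvd : (2*n) ∣ (a.1.val + b.1.val) - (c.1.val + d.1.val) :=
          (Nat.modEq_iff_dvd' (by omega)).mp hnp'.symm
        have := Nat.le_of_dvd (by omega) hdvd
        omega
    · -- K vs cycle
      rw [k_edge_page n m a b hb] at hnp
      have hlt : (a.1.val + b.1.val) % (2*n) < 2*n := Nat.mod_lt _ (by omega)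
      rcases cyc_edge_desc n m hm c d hcc1' hcc2' with ⟨bb, _, hp2, _⟩ | ⟨hp2, _⟩ <;>
        rw [hp2] at hnp <;> omega
    · -- cycle vs K
      rw [k_edge_page n m c d hb'] at hnp
      have hlt : (c.1.val + d.1.val) % (2*n) < 2*n := Nat.mod_lt _ (by omega)
      rcases cyc_edge_desc n m hm a b hcc1 hcc2 with ⟨bb, _, hp2, _⟩ | ⟨hp2, _⟩ <;>
        rw [hp2] at hnp <;> omega
    · -- cycle vs cycle
      rcases cyc_edge_desc n m hm a b hcc1 hcc2 with
        ⟨b1, hb1, hpE, hsE, hE1, hE2, hE3, hE4⟩ | ⟨hpE, hsE, hE1, hE2⟩ <;>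
        rcases cyc_edge_desc n m hm c d hcc1' hcc2' with
          ⟨b2, hb2, hpF, hsF, hF1, hF2, hF3, hF4⟩ | ⟨hpF, hsF, hF1, hF2⟩ <;>
        rw [hpE, hpF] at hnp
      · -- nonwrap vs nonwrap
        by_cases hbb : b1 = b2
        · subst hbb
          omega
        · rcases (by omega : b1 + 2 ≤ b2 ∨ b2 + 2 ≤ b1) with hlt | hlt
          · have hmul : (b1+2)*(2*n) ≤ b2*(2*n) := Nat.mul_le_mul_right _ hlt
            omega
          · have hmul : (b2+2)*(2*n) ≤ b1*(2*n) := Nat.mul_le_mul_right _ hlt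
            omega
      · -- nonwrap vs wrap
        have hble : b1 + 2 ≤ 2*m - 1 := by omega
        have hm1 : (b1+2)*(2*n) ≤ (2*m-1)*(2*n) := Nat.mul_le_mul_right _ hble
        have hm2 : 1*(2*n) ≤ b1*(2*n) := Nat.mul_le_mul_right _ (by omega)
        rw [one_mul] at hm2
        rcases hF1 with hcs | hcs <;> omega
      · -- wrap vs nonwrap
        have hble : b2 + 2 ≤ 2*m - 1 := by omega
        have hm1 : (b2+2)*(2*n) ≤ (2*m-1)*(2*n) := Nat.mul_le_mul_right _ hble
        have hm2 : 1*(2*n) ≤ b2*(2*n) := Nat.mul_le_mul_right _ (by omega)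
        rw [one_mul] at hm2
        rcases hE2 with hcs | hcs <;> omega
      · -- wrap vs wrap
        omega

lemma cyc_degree {N : ℕ} (hN : 3 ≤ N) (v : Fin N) : (cycleGraph N).degree v = 2 := by
  obtain ⟨k, rfl⟩ : ∃ k, N = k + 3 := ⟨N - 3, by omega⟩
  exact cycleGraph_degree_three_le

lemma degree_eq (n m : ℕ) (hn : 1 ≤ n) (hm : 2 ≤ m) (v : VV n m)
    {i : Fintype (((⊤ : SimpleGraph (Fin (2*n))) □ cycleGraph (2*m)).neighborSet v)} :
    @SimpleGraph.degree _ ((⊤ : SimpleGraph (Fin (2*n))) □ cycleGraph (2*m)) v i = 2*n + 1 := by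
  rw [Subsingleton.elim i (SimpleGraph.boxProdFintypeNeighborSet v)]
  rw [SimpleGraph.degree_boxProd, SimpleGraph.complete_graph_degree,
      cyc_degree (by omega) v.2, Fintype.card_fin]
  omega

lemma maxdeg (n m : ℕ) (hn : 1 ≤ n) (hm : 2 ≤ m) :
    ((⊤ : SimpleGraph (Fin (2*n))) □ cycleGraph (2*m)).maxDegree = 2*n + 1 := by
  apply le_antisymm
  · apply SimpleGraph.maxDegree_le_of_forall_degree_le
    intro v
    exact le_of_eq (degree_eq n m hn hm v)
  · have h := SimpleGraph.degree_le_maxDegree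
      ((⊤ : SimpleGraph (Fin (2*n))) □ cycleGraph (2*m))
      ((⟨0, by omega⟩, ⟨0, by omega⟩) : VV n m)
    rwa [degree_eq n m hn hm _] at h

theorem lower_bound (n m : ℕ) (hn : 2 ≤ n) (hm : 2 ≤ m) (k : ℕ)
    (B : MatchingBookEmbedding ((⊤ : SimpleGraph (Fin (2*n))) □ cycleGraph (2*m)) k) :
    2*n + 2 ≤ k := by
  set G := (⊤ : SimpleGraph (Fin (2*n))) □ cycleGraph (2*m) with hG
  by_contra hcon
  push_neg at hcon
  have hdeg : ∀ v : VV n m, Fintype.card (G.incidenceSet v) = 2*n+1 := by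
    intro v
    rw [SimpleGraph.card_incidenceSet_eq_degree]
    exact degree_eq n m (by omega) hm v
  have hinj : ∀ v : VV n m, Function.Injective
      (fun e : G.incidenceSet v => B.page ⟨e.1, e.2.1⟩) := by
    intro v e1 e2 h12
    by_cases heq : e1.1 = e2.1
    · exact Subtype.ext heq
    · exfalso
      have hne : (⟨e1.1, e1.2.1⟩ : G.edgeSet) ≠ ⟨e2.1, e2.2.1⟩ :=
        fun h => heq (Subtype.mk_eq_mk.mp h)
      exact B.matching _ _ hne h12 v e1.2.2 e2.2.2
  have hka : 2*n+1 ≤ k := by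
    have := Fintype.card_le_of_injective _ (hinj (⟨0, by omega⟩, ⟨0, by omega⟩))
    rwa [hdeg, Fintype.card_fin] at this
  have hk : k = 2*n+1 := by omega
  subst hk
  have hsurj : ∀ v : VV n m, Function.Surjective
      (fun e : G.incidenceSet v => B.page ⟨e.1, e.2.1⟩) := by
    intro v
    exact ((Fintype.bijective_iff_injective_and_card _).mpr
      ⟨hinj v, by rw [hdeg, Fintype.card_fin]⟩).2
  have hex : ∀ (x : VV n m) (p : Fin (2*n+1)),
      ∃ f : G.edgeSet, x ∈ (f : Sym2 (VV n m)) ∧ B.page f = p := by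
    intro x p
    obtain ⟨⟨esym, hes⟩, hpe⟩ := hsurj x p
    exact ⟨⟨esym, hes.1⟩, hes.2, hpe⟩
  have huniq : ∀ (x : VV n m) (f g : G.edgeSet), x ∈ (f : Sym2 (VV n m)) →
      x ∈ (g : Sym2 (VV n m)) → B.page f = B.page g → f = g := by
    intro x f g hf hg hpg
    by_contra hne
    exact (B.matching f g hne hpg x hf) hg
  choose E hEmem hEpage using hex
  have hpar : ∀ u v : VV n m, G.Adj u v → B.ord u < B.ord v →
      ((B.ord u).val % 2 ≠ (B.ord v).val % 2) := by
    intro u v huv hord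
    set e : G.edgeSet := ⟨s(u,v), (G.mem_edgeSet).mpr huv⟩ with hee
    set p := B.page e with hpdef
    set F : VV n m → VV n m := fun x => Sym2.Mem.other' (hEmem x p) with hF
    have hs : ∀ x, (E x p : Sym2 (VV n m)) = s(x, F x) :=
      fun x => (Sym2.other_spec' (hEmem x p)).symm
    have hFmem : ∀ x, F x ∈ (E x p : Sym2 (VV n m)) := by
      intro x; rw [hs x]; exact Sym2.mem_mk_right x (F x)
    have hFadj : ∀ x, G.Adj x (F x) := by
      intro x
      have h2 := (E x p).2
      rw [hs x] at h2
      exact (G.mem_edgeSet).mp h2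
    have hFne : ∀ x, F x ≠ x := fun x => (hFadj x).ne'
    have hFinv : ∀ x, F (F x) = x := by
      intro x
      have h2 : E (F x) p = E x p :=
        huniq (F x) _ _ (hEmem (F x) p) (hFmem x) (by rw [hEpage, hEpage])
      have h3 : s(F x, F (F x)) = s(x, F x) := by rw [← hs, h2, hs]
      rcases Sym2.eq_iff.mp h3 with ⟨hxx, _⟩ | ⟨_, hfx⟩
      · exact absurd hxx (hFne x)
      · exact hfx
    set S : Finset (VV n m) := Finset.univ.filter
        (fun x => B.ord u < B.ord x ∧ B.ord x < B.ord v) with hS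
    have hFS : ∀ x ∈ S, F x ∈ S := by
      intro x hx
      rw [hS, Finset.mem_filter] at hx ⊢
      obtain ⟨-, hx1, hx2⟩ := hx
      have hxu : x ≠ u := fun h => by rw [h] at hx1; exact lt_irrefl _ hx1
      have hxv : x ≠ v := fun h => by rw [h] at hx2; exact lt_irrefl _ hx2
      have hEe : E x p ≠ e := by
        intro h
        have hxm : x ∈ (e : Sym2 (VV n m)) := by rw [← h]; exact hEmem x p
        rw [hee] at hxm
        rcases Sym2.mem_iff.mp hxm with h' | h'
        · exact hxu h'
        · exact hxv h'
      have hFu : F x ≠ u := by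
        intro h
        have hum : u ∈ (E x p : Sym2 (VV n m)) := h ▸ hFmem x
        have h2 : e = E x p :=
          huniq u e (E x p) (by rw [hee]; exact Sym2.mem_mk_left u v) hum
            (by rw [hEpage, hpdef])
        exact hEe h2.symm
      have hFv : F x ≠ v := by
        intro h
        have hvm : v ∈ (E x p : Sym2 (VV n m)) := h ▸ hFmem x
        have h2 : e = E x p :=
          huniq v e (E x p) (by rw [hee]; exact Sym2.mem_mk_right u v) hvm
            (by rw [hEpage, hpdef])
        exact hEe h2.symm
      refine ⟨Finset.mem_univ _, ?_, ?_⟩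
      · rcases lt_trichotomy (B.ord (F x)) (B.ord u) with hlt | heq | hlt
        · exact absurd (B.noncross (E x p) e (by rw [hEpage, hpdef]) (F x) x u v
            (by rw [hs x, Sym2.eq_swap]) (by rw [hee]) hlt hx1 hx2) not_false
        · exact absurd (B.ord.injective heq) hFu
        · exact hlt
      · rcases lt_trichotomy (B.ord (F x)) (B.ord v) with hlt | heq | hlt
        · exact hlt
        · exact absurd (B.ord.injective heq) hFv
        · exact absurd (B.noncross e (E x p) (by rw [hEpage]) u v x (F x)
            (by rw [hee]) (hs x) hx1 hx2 hlt) not_false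
    have heven : Even S.card :=
      even_card_of_invol F S hFS (fun x _ => hFinv x) (fun x _ => hFne x)
    have hSimg : S = (Finset.Ioo (B.ord u) (B.ord v)).image B.ord.symm := by
      ext x
      rw [hS, Finset.mem_filter, Finset.mem_image]
      constructor
      · rintro ⟨-, hx1, hx2⟩
        exact ⟨B.ord x, Finset.mem_Ioo.mpr ⟨hx1, hx2⟩, B.ord.symm_apply_apply x⟩
      · rintro ⟨y, hy, rfl⟩
        rw [Finset.mem_Ioo] at hy
        refine ⟨Finset.mem_univ _, ?_, ?_⟩ <;> rw [B.ord.apply_symm_apply]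
        · exact hy.1
        · exact hy.2
    have hcardS : S.card = (B.ord v).val - (B.ord u).val - 1 := by
      rw [hSimg, Finset.card_image_of_injective _ B.ord.symm.injective, Fin.card_Ioo]
    rw [hcardS, Nat.even_iff] at heven
    have hlt' : (B.ord u).val < (B.ord v).val := hord
    omega
  have hpar' : ∀ u v : VV n m, G.Adj u v → ((B.ord u).val % 2 ≠ (B.ord v).val % 2) := by
    intro u v huv
    rcases lt_trichotomy (B.ord u) (B.ord v) with h | h | h
    · exact hpar u v huv h
    · exact absurd (B.ord.injective h) (G.ne_of_adj huv)
    · exact (hpar v u huv.symm h).symm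
  have h01 : G.Adj (⟨0, by omega⟩, ⟨0, by omega⟩) (⟨1, by omega⟩, ⟨0, by omega⟩) := by
    rw [hG, SimpleGraph.boxProd_adj]
    exact Or.inl ⟨by rw [top_adj]; exact Fin.ne_of_val_ne (by simp), rfl⟩
  have h12 : G.Adj (⟨1, by omega⟩, ⟨0, by omega⟩) (⟨2, by omega⟩, ⟨0, by omega⟩) := by
    rw [hG, SimpleGraph.boxProd_adj]
    exact Or.inl ⟨by rw [top_adj]; exact Fin.ne_of_val_ne (by simp), rfl⟩
  have h02 : G.Adj (⟨0, by omega⟩, ⟨0, by omega⟩) (⟨2, by omega⟩, ⟨0, by omega⟩) := by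
    rw [hG, SimpleGraph.boxProd_adj]
    exact Or.inl ⟨by rw [top_adj]; exact Fin.ne_of_val_ne (by simp), rfl⟩
  have c01 := hpar' _ _ h01
  have c12 := hpar' _ _ h12
  have c02 := hpar' _ _ h02
  omega

end MBT10

/-- For `n, m ≥ 2`, `mbt (K_{2n} □ C_{2m}) = 2n + 2 = Δ + 1`. -/
theorem stmt_10 (n m : ℕ) (hn : 2 ≤ n) (hm : 2 ≤ m) :
    mbt ((⊤ : SimpleGraph (Fin (2 * n))) □ cycleGraph (2 * m)) = 2 * n + 2 ∧
    ((⊤ : SimpleGraph (Fin (2 * n))) □ cycleGraph (2 * m)).maxDegree + 1 = 2 * n + 2 := by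
  constructor
  · have hmem : 2*n+2 ∈ {k | Nonempty (MatchingBookEmbedding
        ((⊤ : SimpleGraph (Fin (2*n))) □ cycleGraph (2*m)) k)} :=
      MBT10.exists_embedding n m (by omega) hm
    refine le_antisymm (Nat.sInf_le hmem) (le_csInf ⟨_, hmem⟩ ?_)
    rintro k ⟨B⟩
    exact MBT10.lower_bound n m hn hm k B
  · rw [MBT10.maxdeg n m (by omega) hm]
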